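/- Let C be a nonempty finite type, P a Borel probability measure on ℝ^n, and d : ℝ^n → ℝ^n → ℝ≥0∞ a Borel-measurable cost. Then the infimum, over all decoders f : C → ℝ^n and all probability measures γ on C, of W_d(f#γ, P), equals the infimum, over all decoders f : C → ℝ^n and all Borel-measurable deterministic discrete encoders T̄ : ℝ^n → C, of ∫ d(f (T̄ x), x) dP(x). -/

import Mathlib

open MeasureTheory ProbabilityTheory ENNReal

/-- Kantorovich cost `W_c(μ, ν)`: the infimum of `∫ c(x, y) dπ(x, y)` over all
probability measures `π` on the product whose first marginal is `μ` and whose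
second marginal is `ν`. -/
noncomputable def Wcost {X Y : Type*} [MeasurableSpace X] [MeasurableSpace Y]
    (c : X → Y → ℝ≥0∞) (μ : Measure X) (ν : Measure Y) : ℝ≥0∞ :=
  ⨅ (π : Measure (X × Y)) (_ : IsProbabilityMeasure π)
    (_ : π.fst = μ) (_ : π.snd = ν), ∫⁻ p, c p.1 p.2 ∂π

/-- A measurable argmin selector over a nonempty list. -/
lemma exists_measurable_argmin_list {X C : Type*} [MeasurableSpace X]
    [MeasurableSpace C] [DiscreteMeasurableSpace C] [Countable C]
    (g : C → X → ℝ≥0∞) (hg : ∀ c, Measurable (g c)) :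
    ∀ (l : List C), l ≠ [] → ∃ T : X → C, Measurable T ∧
      (∀ x, T x ∈ l) ∧ ∀ x, ∀ c ∈ l, g (T x) x ≤ g c x := by
  intro l
  induction l with
  | nil => intro h; exact absurd rfl h
  | cons c l ih =>
    intro _
    rcases eq_or_ne l (List.nil) with rfl | hl
    · refine ⟨fun _ => c, measurable_const, fun x => List.mem_cons_self, ?_⟩
      intro x c' hc'
      simp only [List.mem_singleton] at hc'
      subst hc'; exact le_rfl
    · obtain ⟨T', hT', hmem, hmin⟩ := ih hl
      have hgT' : Measurable fun x => g (T' x) x := by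
        have h1 : Measurable (fun p : X × C => g p.2 p.1) :=
          measurable_from_prod_countable_left (fun c => hg c)
        exact h1.comp (measurable_id.prodMk hT')
      refine ⟨fun x => if g c x ≤ g (T' x) x then c else T' x, ?_, ?_, ?_⟩
      · exact Measurable.ite (measurableSet_le (hg c) hgT') measurable_const hT'
      · intro x
        by_cases h : g c x ≤ g (T' x) x
        · simp [h]
        · simp [h, hmem x]
      · intro x c' hc'
        by_cases h : g c x ≤ g (T' x) x
        · simp only [if_pos h]
          rcases List.mem_cons.mp hc' with rfl | hc'
          · exact le_rfl
          · exact h.trans (hmin x c' hc')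
        · simp only [if_neg h]
          rcases List.mem_cons.mp hc' with rfl | hc'
          · exact le_of_not_ge h
          · exact hmin x c' hc'

/-- **Theorem 1 of the paper (reconstruction-distortion form)**: for a nonempty finite
type `C`, a Borel probability measure `P` on `ℝ^n`, and a Borel-measurable cost `d`,
the infimum over decoders `f : C → ℝ^n` and probability measures `γ` on `C` of
`W_d(f#γ, P)` equals the infimum over decoders `f` and Borel-measurable deterministic
discrete encoders `T̄ : ℝ^n → C` of `∫ d(f (T̄ x), x) dP(x)`. -/
theorem stmt4 {n : ℕ} {C : Type*} [Fintype C] [Nonempty C]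
    [MeasurableSpace C] [DiscreteMeasurableSpace C]
    (P : Measure (EuclideanSpace ℝ (Fin n))) [IsProbabilityMeasure P]
    (d : EuclideanSpace ℝ (Fin n) → EuclideanSpace ℝ (Fin n) → ℝ≥0∞)
    (hd : Measurable (Function.uncurry d)) :
    (⨅ (f : C → EuclideanSpace ℝ (Fin n)) (γ : Measure C)
       (_ : IsProbabilityMeasure γ), Wcost d (γ.map f) P)
      = ⨅ (f : C → EuclideanSpace ℝ (Fin n))
          (T : EuclideanSpace ℝ (Fin n) → C) (_ : Measurable T),
          ∫⁻ x, d (f (T x)) x ∂P := by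
  have hd' : Measurable fun p : EuclideanSpace ℝ (Fin n) × EuclideanSpace ℝ (Fin n) =>
      d p.1 p.2 := hd
  apply le_antisymm
  · -- easy direction: given an encoder T, take γ = T#P and couple via x ↦ (f (T x), x)
    refine le_iInf fun f => le_iInf fun T => le_iInf fun hT => ?_
    have hf : Measurable f := Measurable.of_discrete
    have hfT : Measurable fun x => f (T x) := hf.comp hT
    have hγ : IsProbabilityMeasure (P.map T) := Measure.isProbabilityMeasure_map hT.aemeasurable
    refine iInf_le_of_le f (iInf_le_of_le (P.map T) (iInf_le_of_le hγ ?_))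
    set π : Measure (EuclideanSpace ℝ (Fin n) × EuclideanSpace ℝ (Fin n)) :=
      P.map (fun x => (f (T x), x)) with hπdef
    have hmeasmap : Measurable fun x : EuclideanSpace ℝ (Fin n) => (f (T x), x) :=
      hfT.prodMk measurable_id
    have hπprob : IsProbabilityMeasure π := Measure.isProbabilityMeasure_map hmeasmap.aemeasurable
    have hfst : π.fst = (P.map T).map f := by
      rw [Measure.fst, hπdef, Measure.map_map measurable_fst hmeasmap,
        Measure.map_map hf hT]
      rfl
    have hsnd : π.snd = P := by
      rw [Measure.snd, hπdef, Measure.map_map measurable_snd hmeasmap]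
      exact Measure.map_id
    have hint : ∫⁻ p, d p.1 p.2 ∂π = ∫⁻ x, d (f (T x)) x ∂P := by
      rw [hπdef, lintegral_map hd' hmeasmap]
    rw [Wcost]
    refine iInf_le_of_le π (iInf_le_of_le hπprob (iInf_le_of_le hfst
      (iInf_le_of_le hsnd ?_)))
    rw [hint]
  · -- hard direction: from a coupling π, build an argmin encoder
    refine le_iInf fun f => le_iInf fun γ => le_iInf fun hγ => ?_
    have hf : Measurable f := Measurable.of_discrete
    rw [Wcost]
    refine le_iInf fun π => le_iInf fun hπ => le_iInf fun hfst => le_iInf fun hsnd => ?_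
    obtain ⟨T, hT, -, hmin⟩ := exists_measurable_argmin_list
      (fun c x => d (f c) x)
      (fun c => hd.comp (measurable_const.prodMk measurable_id))
      Finset.univ.toList
      (by
        simp only [ne_eq, Finset.toList_eq_nil]
        exact Finset.univ_nonempty.ne_empty)
    have hmin' : ∀ x (c : C), d (f (T x)) x ≤ d (f c) x := fun x c =>
      hmin x c (by simp [Finset.mem_toList])
    refine le_trans (iInf_le_of_le f (iInf_le_of_le T (iInf_le_of_le hT le_rfl))) ?_
    have hmeasInt : Measurable fun x => d (f (T x)) x :=
      hd.comp ((hf.comp hT).prodMk measurable_id)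
    have hP : ∫⁻ x, d (f (T x)) x ∂P = ∫⁻ p, d (f (T p.2)) p.2 ∂π := by
      rw [← hsnd, Measure.snd, lintegral_map hmeasInt measurable_snd]
    rw [hP]
    -- a.e., the first coordinate lies in the range of f
    have hrange : MeasurableSet (Set.range f) := (Set.finite_range f).measurableSet
    have hae : ∀ᵐ p ∂π, p.1 ∈ Set.range f := by
      rw [ae_iff]
      have : {p : EuclideanSpace ℝ (Fin n) × EuclideanSpace ℝ (Fin n) |
          ¬ p.1 ∈ Set.range f} = Prod.fst ⁻¹' (Set.range f)ᶜ := rfl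
      have h2 : f ⁻¹' (Set.range f)ᶜ = ∅ := by ext c; simp
      rw [this, ← Measure.fst_apply hrange.compl, hfst,
        Measure.map_apply hf hrange.compl, h2, measure_empty]
    refine lintegral_mono_ae ?_
    filter_upwards [hae] with p hp
    obtain ⟨c, hc⟩ := hp
    calc d (f (T p.2)) p.2 ≤ d (f c) p.2 := hmin' p.2 c
      _ = d p.1 p.2 := by rw [hc]
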